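/- Let G be a simple undirected graph with maximum degree δ, source s and sink t, in which every vertex and edge lies on an s-t path. If S is a feedback vertex set of size at most 2·OPT_FVS, then S ∪ N(S) is a tracking set of size at most 2(δ+1)·OPT_T, where OPT_T is the minimum size of a tracking set (using that every tracking set is a feedback vertex set, so OPT_FVS ≤ OPT_T). -/

import Mathlib

open SimpleGraph

noncomputable def trackSeq {V : Type} (T : Set V) (l : List V) : List V :=
  l.filter (fun v => @decide (v ∈ T) (Classical.propDecidable _))


/-- `T` is a tracking set for `s`-`t` paths in `G`: distinct `s`-`t` paths have
distinct sequences of `T`-vertices along them. -/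
def IsTrackingSet {V : Type} (G : SimpleGraph V) (s t : V) (T : Set V) : Prop :=
  ∀ p q : G.Walk s t, p.IsPath → q.IsPath →
    trackSeq T p.support = trackSeq T q.support → p = q

/-- Every vertex and every edge of `G` lies on some `s`-`t` path. -/
def Reduced {V : Type} (G : SimpleGraph V) (s t : V) : Prop :=
  (∀ v : V, ∃ p : G.Walk s t, p.IsPath ∧ v ∈ p.support) ∧
  (∀ e ∈ G.edgeSet, ∃ p : G.Walk s t, p.IsPath ∧ e ∈ p.edges)

/-- `S` is a feedback vertex set: every cycle of `G` meets `S`. -/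
def IsFVS {V : Type} (G : SimpleGraph V) (S : Set V) : Prop :=
  ∀ (v : V) (c : G.Walk v v), c.IsCycle → ∃ x ∈ c.support, x ∈ S

/-- The neighbourhood of a set of vertices. -/
def nbhd {V : Type} (G : SimpleGraph V) (S : Set V) : Set V :=
  {v | ∃ u ∈ S, G.Adj u v}

variable {V : Type} {G : SimpleGraph V}

namespace Aux

lemma mem_trackSeq {T : Set V} {l : List V} {x : V} :
    x ∈ trackSeq T l ↔ x ∈ l ∧ x ∈ T := by
  simp [trackSeq, List.mem_filter]

lemma trackSeq_append (T : Set V) (l₁ l₂ : List V) :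
    trackSeq T (l₁ ++ l₂) = trackSeq T l₁ ++ trackSeq T l₂ :=
  List.filter_append ..

lemma trackSeq_cons_of_mem {T : Set V} {x : V} (hx : x ∈ T) (l : List V) :
    trackSeq T (x :: l) = x :: trackSeq T l := by
  simp [trackSeq, List.filter_cons, hx]

lemma trackSeq_eq_nil {T : Set V} {l : List V} (h : ∀ x ∈ l, x ∉ T) :
    trackSeq T l = [] := by
  simp only [trackSeq, List.filter_eq_nil_iff]
  intro a ha
  simpa using h a ha

/-- splitting a list equation at a common element not in the prefixes -/
lemma split_eq {x : V} : ∀ {l₁ l₂ l₃ l₄ : List V}, l₁ ++ x :: l₂ = l₃ ++ x :: l₄ →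
    x ∉ l₁ → x ∉ l₃ → l₁ = l₃ ∧ l₂ = l₄ := by
  intro l₁
  induction l₁ with
  | nil =>
    intro l₂ l₃ l₄ h h₁ h₃
    cases l₃ with
    | nil => simpa using h
    | cons c l₃ =>
      exfalso
      simp only [List.nil_append, List.cons_append, List.cons.injEq] at h
      exact h₃ (h.1 ▸ List.mem_cons_self)
  | cons a l₁ ih =>
    intro l₂ l₃ l₄ h h₁ h₃
    cases l₃ with
    | nil =>
      exfalso
      simp only [List.nil_append, List.cons_append, List.cons.injEq] at h
      exact h₁ (h.1 ▸ List.mem_cons_self)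
    | cons c l₃ =>
      simp only [List.cons_append, List.cons.injEq] at h
      obtain ⟨rfl, h⟩ := h
      obtain ⟨h5, h6⟩ := ih h (fun hm => h₁ (List.mem_cons_of_mem _ hm))
        (fun hm => h₃ (List.mem_cons_of_mem _ hm))
      exact ⟨by rw [h5], h6⟩

lemma support_concat {a b : V} (w : G.Walk a b) :
    w.support = w.support.dropLast ++ [b] := by
  induction w with
  | nil => simp
  | cons h w ih =>
    rename_i u v c
    rw [SimpleGraph.Walk.support_cons]
    conv_lhs => rw [ih]
    rw [List.dropLast_cons_of_ne_nil (SimpleGraph.Walk.support_ne_nil _)]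
    conv_rhs => rw [ih]
    simp

lemma loop_path_nil {a : V} (w : G.Walk a a) (hw : w.IsPath) : w = SimpleGraph.Walk.nil := by
  cases w with
  | nil => rfl
  | cons h w =>
    exfalso
    have := hw.support_nodup
    rw [SimpleGraph.Walk.support_cons, List.nodup_cons] at this
    exact this.1 (w.end_mem_support)

end Aux

namespace Aux
open SimpleGraph.Walk

section TU
variable [DecidableEq V]

lemma length_pos_of_ne {a b : V} (w : G.Walk a b) (h : a ≠ b) : 0 < w.length := by
  cases w with
  | nil => exact absurd rfl h
  | cons h w => simp

lemma takeUntil_start_support {a b : V} (p : G.Walk a b) (h : a ∈ p.support) :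
    (p.takeUntil a h).support = [a] := by
  set w := p.takeUntil a h with hw
  have h1 : w.support.count a = 1 := p.count_support_takeUntil_eq_one h
  have h2 := w.support_eq_cons
  rcases hl : w.support.tail with _ | ⟨c, l⟩
  · rw [h2, hl]
  · exfalso
    have h5 : w.support = a :: c :: l := by rw [h2, hl]
    have h3 := support_concat w
    rw [h5] at h3
    have h7 : a ∈ c :: l := by
      rw [show (a :: c :: l).dropLast = a :: (c :: l).dropLast by simp] at h3
      have h4 := (List.cons.inj h3).2
      rw [h4]
      simp
    rw [h5, List.count_cons_self] at h1
    have h9 : List.count a (c :: l) = 0 := by omega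
    exact (List.count_eq_zero.mp h9) h7

lemma length_split {a b x : V} (p : G.Walk a b) (hx : x ∈ p.support) :
    (p.takeUntil x hx).length + (p.dropUntil x hx).length = p.length := by
  have := congrArg SimpleGraph.Walk.length (p.take_spec hx)
  rwa [length_append] at this

lemma path_support_split {a b x : V} {p : G.Walk a b} (hp : p.IsPath) (hx : x ∈ p.support) :
    p.support = (p.takeUntil x hx).support.dropLast ++ x :: (p.dropUntil x hx).support.tail
    ∧ x ∉ (p.takeUntil x hx).support.dropLast ∧ x ∉ (p.dropUntil x hx).support.tail := by
  have h1 : p.support = (p.takeUntil x hx).support ++ (p.dropUntil x hx).support.tail := by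
    conv_lhs => rw [← p.take_spec hx]
    rw [support_append]
  have h2 : (p.takeUntil x hx).support = (p.takeUntil x hx).support.dropLast ++ [x] :=
    support_concat _
  have h3 : p.support = (p.takeUntil x hx).support.dropLast ++ x :: (p.dropUntil x hx).support.tail := by
    rw [h1]; conv_lhs => rw [h2]
    rw [List.append_assoc, List.singleton_append]
  refine ⟨h3, ?_, ?_⟩
  · have := hp.support_nodup
    rw [h3] at this
    have := List.disjoint_of_nodup_append this
    exact fun hmem => this hmem (List.mem_cons_self)
  · have := hp.support_nodup
    rw [h3] at this
    exact (List.nodup_cons.mp ((List.nodup_append.mp this).2.1)).1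

lemma firstMeet {a b : V} (W : Set V) (p : G.Walk a b) (hex : ∃ z ∈ p.support, z ∈ W) :
    ∃ (x : V) (hx : x ∈ p.support), x ∈ W ∧
      ∀ z ∈ (p.takeUntil x hx).support, z ∈ W → z = x := by
  induction p with
  | nil =>
    obtain ⟨z, hz, hzW⟩ := hex
    rw [mem_support_nil_iff] at hz
    subst hz
    refine ⟨z, by simp, hzW, ?_⟩
    intro y hy _
    have := takeUntil_start_support (SimpleGraph.Walk.nil : G.Walk z z) (by simp)
    rw [this] at hy
    simpa using hy
  | cons h p ih =>
    rename_i u v c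
    by_cases hu : u ∈ W
    · refine ⟨u, start_mem_support _, hu, ?_⟩
      intro y hy _
      have := takeUntil_start_support (SimpleGraph.Walk.cons h p) (start_mem_support _)
      rw [this] at hy
      simpa using hy
    · obtain ⟨z, hz, hzW⟩ := hex
      rw [support_cons, List.mem_cons] at hz
      have hz' : z ∈ p.support := by
        rcases hz with rfl | hz
        · exact absurd hzW hu
        · exact hz
      obtain ⟨x, hx, hxW, hfirst⟩ := ih ⟨z, hz', hzW⟩
      have hne : u ≠ x := fun he => hu (he ▸ hxW)
      have hxmem : x ∈ (SimpleGraph.Walk.cons h p).support := by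
        rw [support_cons]; exact List.mem_cons_of_mem _ hx
      refine ⟨x, hxmem, hxW, ?_⟩
      have heq : (SimpleGraph.Walk.cons h p).takeUntil x hxmem
          = SimpleGraph.Walk.cons h (p.takeUntil x hx) := by
        simp [SimpleGraph.Walk.takeUntil, hne]
      intro y hy hyW
      rw [heq, support_cons, List.mem_cons] at hy
      rcases hy with rfl | hy
      · exact absurd hyW hu
      · exact hfirst y hy hyW

end TU
end Aux

namespace Aux
open SimpleGraph.Walk

lemma trackSeq_cons_of_not_mem {T : Set V} {x : V} (hx : x ∉ T) (l : List V) :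
    trackSeq T (x :: l) = trackSeq T l := by
  simp [trackSeq, List.filter_cons, hx]

lemma edge_start {s u t y : V} (h : G.Adj s u) (w : G.Walk u t)
    (hp : (SimpleGraph.Walk.cons h w).IsPath)
    (he : s(s, y) ∈ (SimpleGraph.Walk.cons h w).edges) : y = u := by
  rw [edges_cons, List.mem_cons] at he
  rcases he with he | he
  · rw [Sym2.eq_iff] at he
    rcases he with ⟨h1, h2⟩ | ⟨h1, h2⟩
    · exact h2
    · exact absurd h1 h.ne
  · exfalso
    have hs : s ∈ w.support := SimpleGraph.Walk.fst_mem_support_of_mem_edges w he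
    exact ((cons_isPath_iff h w).mp hp).2 hs

section TU
variable [DecidableEq V]

lemma end_mem_takeUntil {a c x : V} {r : G.Walk a c} (hr : r.IsPath) (hx : x ∈ r.support)
    (hc : c ∈ (r.takeUntil x hx).support) : x = c := by
  by_contra hne
  obtain ⟨hsplit, hxA, hxB⟩ := path_support_split hr hx
  have h2 : (r.takeUntil x hx).support = (r.takeUntil x hx).support.dropLast ++ [x] :=
    support_concat _
  have hcA : c ∈ (r.takeUntil x hx).support.dropLast := by
    rw [h2, List.mem_append] at hc
    rcases hc with hc | hc
    · exact hc
    · simp at hc; exact absurd hc.symm hne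
  have hcB : c ∈ x :: (r.dropUntil x hx).support.tail := by
    have : c ∈ (r.dropUntil x hx).support := end_mem_support _
    rwa [(r.dropUntil x hx).support_eq_cons] at this
  have hnd := hr.support_nodup
  rw [hsplit] at hnd
  exact (List.disjoint_of_nodup_append hnd) hcA hcB

end TU
end Aux

namespace Aux
open SimpleGraph.Walk

variable [DecidableEq V]

lemma trackA {S T : Set V}
    (hS : ∀ (v : V) (c : G.Walk v v), c.IsCycle → ∃ x ∈ c.support, x ∈ S)
    (hST : S ⊆ T) (hN : ∀ ⦃u v : V⦄, u ∈ S → G.Adj u v → v ∈ T) :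
    ∀ n ⦃s t : V⦄ (p q : G.Walk s t), p.length + q.length ≤ n → p.IsPath → q.IsPath →
      trackSeq T p.support = trackSeq T q.support → p = q := by
  intro n
  induction n with
  | zero =>
    intro s t p q hlen hp hq hseq
    cases p with
    | nil => exact (loop_path_nil q hq).symm
    | cons h p' => simp at hlen
  | succ n ih =>
    intro s t p q hlen hp hq hseq
    cases p with
    | nil => exact (loop_path_nil q hq).symm
    | cons h p' =>
      rename_i u
      cases q with
      | nil => exact loop_path_nil _ hp
      | cons h' q' =>
        rename_i u'
        by_cases huu : u = u'
        · subst huu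
          have hseq' : trackSeq T p'.support = trackSeq T q'.support := by
            rw [support_cons, support_cons] at hseq
            by_cases hsT : s ∈ T
            · rw [trackSeq_cons_of_mem hsT, trackSeq_cons_of_mem hsT] at hseq
              exact (List.cons.inj hseq).2
            · rwa [trackSeq_cons_of_not_mem hsT, trackSeq_cons_of_not_mem hsT] at hseq
          have hpq := ih p' q' (by simp at hlen; omega) hp.of_cons hq.of_cons hseq'
          rw [hpq]
        · -- first edges differ
          have hp' : p'.IsPath := hp.of_cons
          have hq' : q'.IsPath := hq.of_cons
          have hsp : s ∉ p'.support := ((cons_isPath_iff h p').mp hp).2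
          have hsq : s ∉ q'.support := ((cons_isPath_iff h' q').mp hq).2
          obtain ⟨b, hbp, hbq, hfirst⟩ := firstMeet {z | z ∈ q'.support} p'
            ⟨t, end_mem_support _, end_mem_support _⟩
          simp only [Set.mem_setOf_eq] at hbq hfirst
          set A2 := p'.takeUntil b hbp with hA2def
          set B2 := q'.takeUntil b hbq with hB2def
          have hA2path : A2.IsPath := hp'.takeUntil hbp
          have hB2path : B2.IsPath := hq'.takeUntil hbq
          have hA2sub : A2.support ⊆ p'.support := support_takeUntil_subset _ _
          have hB2sub : B2.support ⊆ q'.support := support_takeUntil_subset _ _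
          have hAB : ∀ z ∈ A2.support, z ∈ B2.support → z = b :=
            fun z h1 h2 => hfirst z h1 (hB2sub h2)
          have hP2 : (SimpleGraph.Walk.cons h A2).IsPath := by
            rw [cons_isPath_iff]
            exact ⟨hA2path, fun hs2 => hsp (hA2sub hs2)⟩
          have hQ2 : (SimpleGraph.Walk.cons h' B2).IsPath := by
            rw [cons_isPath_iff]
            exact ⟨hB2path, fun hs2 => hsq (hB2sub hs2)⟩
          have hBrev : B2.support.reverse = b :: B2.support.dropLast.reverse := by
            conv_lhs => rw [support_concat B2]
            simp
          have hsupp : ((SimpleGraph.Walk.cons h A2).append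
              (SimpleGraph.Walk.cons h' B2).reverse).support.tail
              = A2.support ++ (B2.support.dropLast.reverse ++ [s]) := by
            rw [tail_support_append, support_reverse, support_cons, support_cons,
              List.tail_cons, List.reverse_cons, hBrev]
            simp
          -- the cycle
          have hcyc : ((SimpleGraph.Walk.cons h A2).append
              (SimpleGraph.Walk.cons h' B2).reverse).IsCycle := by
            rw [isCycle_def]
            refine ⟨?_, ?_, ?_⟩
            · rw [isTrail_def, edges_append, edges_reverse, List.nodup_append]
              refine ⟨hP2.isTrail.edges_nodup, List.nodup_reverse.mpr hQ2.isTrail.edges_nodup, ?_⟩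
              intro e he1 e' he2 hee'
              subst hee'
              rw [List.mem_reverse] at he2
              induction e using Sym2.ind with
              | _ y z =>
              have hy1 : y ∈ (SimpleGraph.Walk.cons h A2).support :=
                fst_mem_support_of_mem_edges _ he1
              have hz1 : z ∈ (SimpleGraph.Walk.cons h A2).support :=
                snd_mem_support_of_mem_edges _ he1
              have hy2 : y ∈ (SimpleGraph.Walk.cons h' B2).support :=
                fst_mem_support_of_mem_edges _ he2
              have hz2 : z ∈ (SimpleGraph.Walk.cons h' B2).support :=
                snd_mem_support_of_mem_edges _ he2
              have hyz : y ≠ z := (adj_of_mem_edges _ he1).ne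
              have hmem : ∀ w₀ : V, w₀ ∈ (SimpleGraph.Walk.cons h A2).support →
                  w₀ ∈ (SimpleGraph.Walk.cons h' B2).support → w₀ = s ∨ w₀ = b := by
                intro w₀ hw1 hw2
                rw [support_cons, List.mem_cons] at hw1 hw2
                rcases hw1 with rfl | hw1
                · exact Or.inl rfl
                rcases hw2 with rfl | hw2
                · exact Or.inl rfl
                · exact Or.inr (hAB _ hw1 hw2)
              rcases hmem y hy1 hy2 with rfl | rfl
              · rcases hmem z hz1 hz2 with rfl | rfl
                · exact hyz rfl
                · have e1 := edge_start h A2 hP2 he1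
                  have e2 := edge_start h' B2 hQ2 he2
                  exact huu (e1.symm.trans e2)
              · rcases hmem z hz1 hz2 with rfl | rfl
                · rw [Sym2.eq_swap] at he1 he2
                  have e1 := edge_start h A2 hP2 he1
                  have e2 := edge_start h' B2 hQ2 he2
                  exact huu (e1.symm.trans e2)
                · exact hyz rfl
            · intro hfalse
              rw [cons_append] at hfalse
              cases hfalse
            · rw [hsupp]
              refine List.Nodup.append hA2path.support_nodup (List.Nodup.append ?_ (by simp) ?_) ?_
              · exact List.nodup_reverse.mpr
                  (List.Nodup.sublist (List.dropLast_sublist _) hB2path.support_nodup)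
              · intro z hz1 hz2
                simp only [List.mem_singleton] at hz2
                subst hz2
                rw [List.mem_reverse] at hz1
                exact hsq (hB2sub (List.dropLast_subset _ hz1))
              · intro z hz1 hz2
                rw [List.mem_append] at hz2
                rcases hz2 with hz2 | hz2
                · rw [List.mem_reverse] at hz2
                  have hzB : z ∈ B2.support := List.dropLast_subset _ hz2
                  have hzb : z = b := hAB z hz1 hzB
                  subst hzb
                  have hnd := hB2path.support_nodup
                  rw [support_concat B2] at hnd
                  exact (List.disjoint_of_nodup_append hnd) hz2 (by simp)
                · simp only [List.mem_singleton] at hz2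
                  subst hz2
                  exact hsp (hA2sub hz1)
          obtain ⟨x, hxc, hxS⟩ := hS s _ hcyc
          -- membership analysis of the cycle support
          have hxcase : x = s ∨ x ∈ A2.support ∨ x ∈ B2.support := by
            rw [SimpleGraph.Walk.support_eq_cons, List.mem_cons, hsupp] at hxc
            rcases hxc with rfl | hxc
            · exact Or.inl rfl
            rw [List.mem_append, List.mem_append] at hxc
            rcases hxc with h1 | h1 | h1
            · exact Or.inr (Or.inl h1)
            · rw [List.mem_reverse] at h1
              exact Or.inr (Or.inr (List.dropLast_subset _ h1))
            · simp only [List.mem_singleton] at h1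
              exact Or.inl h1
          rcases hxcase with rfl | hxAB
          · -- x = s : compare second vertices
            exfalso
            have huT : u ∈ T := hN hxS h
            have hu'T : u' ∈ T := hN hxS h'
            have h1 : (SimpleGraph.Walk.cons h p').support = x :: u :: p'.support.tail := by
              rw [support_cons]
              exact congrArg (List.cons x) p'.support_eq_cons
            have h2 : (SimpleGraph.Walk.cons h' q').support = x :: u' :: q'.support.tail := by
              rw [support_cons]
              exact congrArg (List.cons x) q'.support_eq_cons
            rw [h1, h2] at hseq
            by_cases hsT : x ∈ T
            · rw [trackSeq_cons_of_mem hsT, trackSeq_cons_of_mem hsT,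
                trackSeq_cons_of_mem huT, trackSeq_cons_of_mem hu'T] at hseq
              exact huu (List.cons.inj (List.cons.inj hseq).2).1
            · rw [trackSeq_cons_of_not_mem hsT, trackSeq_cons_of_not_mem hsT,
                trackSeq_cons_of_mem huT, trackSeq_cons_of_mem hu'T] at hseq
              exact huu (List.cons.inj hseq).1
          · -- x in one of the arcs
            have hxs : x ≠ s := by
              rcases hxAB with hxA | hxB
              · exact fun he => hsp (he ▸ hA2sub hxA)
              · exact fun he => hsq (he ▸ hB2sub hxB)
            have hxT : x ∈ T := hST hxS
            have hxp : x ∈ (SimpleGraph.Walk.cons h p').support := by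
              rcases hxAB with hxA | hxB
              · rw [support_cons]
                exact List.mem_cons_of_mem _ (hA2sub hxA)
              · have : x ∈ trackSeq T (SimpleGraph.Walk.cons h' q').support :=
                  mem_trackSeq.mpr ⟨by rw [support_cons]; exact List.mem_cons_of_mem _ (hB2sub hxB), hxT⟩
                rw [← hseq] at this
                exact (mem_trackSeq.mp this).1
            have hxq : x ∈ (SimpleGraph.Walk.cons h' q').support := by
              have : x ∈ trackSeq T (SimpleGraph.Walk.cons h p').support :=
                mem_trackSeq.mpr ⟨hxp, hxT⟩
              rw [hseq] at this
              exact (mem_trackSeq.mp this).1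
            by_cases hxt : x = t
            · -- x = t : compare penultimate vertices
              exfalso
              subst hxt
              have hbt : b = x := by
                rcases hxAB with hxA | hxB
                · exact end_mem_takeUntil hp' hbp hxA
                · exact end_mem_takeUntil hq' hbq hxB
              subst hbt
              have hp'eq : p' = A2 := by
                have hdnil : p'.dropUntil b hbp = SimpleGraph.Walk.nil :=
                  loop_path_nil _ (hp'.dropUntil hbp)
                conv_lhs => rw [← take_spec p' hbp]
                rw [hdnil, append_nil]
              have hq'eq : q' = B2 := by
                have hdnil : q'.dropUntil b hbq = SimpleGraph.Walk.nil :=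
                  loop_path_nil _ (hq'.dropUntil hbq)
                conv_lhs => rw [← take_spec q' hbq]
                rw [hdnil, append_nil]
              have htT : b ∈ T := hST hxS
              cases hrevp : (SimpleGraph.Walk.cons h p').reverse with
              | nil =>
                have hcontra := congrArg SimpleGraph.Walk.reverse hrevp
                rw [SimpleGraph.Walk.reverse_reverse, SimpleGraph.Walk.reverse_nil] at hcontra
                cases hcontra
              | cons hadj pr =>
                rename_i w
                cases hrevq : (SimpleGraph.Walk.cons h' q').reverse with
                | nil =>
                  have hcontra := congrArg SimpleGraph.Walk.reverse hrevq
                  rw [SimpleGraph.Walk.reverse_reverse, SimpleGraph.Walk.reverse_nil] at hcontra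
                  cases hcontra
                | cons hadj' qr =>
                  rename_i w'
                  have hwT : w ∈ T := hN hxS hadj
                  have hw'T : w' ∈ T := hN hxS hadj'
                  have hsupp_p : (SimpleGraph.Walk.cons h p').support
                      = pr.support.tail.reverse ++ [w, b] := by
                    have h1 : (SimpleGraph.Walk.cons h p').support.reverse
                        = b :: pr.support := by
                      rw [← support_reverse, hrevp, support_cons]
                    have h2 : (SimpleGraph.Walk.cons h p').support
                        = (b :: pr.support).reverse := by
                      rw [← h1, List.reverse_reverse]
                    rw [h2]
                    conv_lhs => rw [pr.support_eq_cons]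
                    simp only [List.reverse_cons, List.append_assoc, List.singleton_append]
                  have hsupp_q : (SimpleGraph.Walk.cons h' q').support
                      = qr.support.tail.reverse ++ [w', b] := by
                    have h1 : (SimpleGraph.Walk.cons h' q').support.reverse
                        = b :: qr.support := by
                      rw [← support_reverse, hrevq, support_cons]
                    have h2 : (SimpleGraph.Walk.cons h' q').support
                        = (b :: qr.support).reverse := by
                      rw [← h1, List.reverse_reverse]
                    rw [h2]
                    conv_lhs => rw [qr.support_eq_cons]
                    simp only [List.reverse_cons, List.append_assoc, List.singleton_append]
                  rw [hsupp_p, hsupp_q, trackSeq_append, trackSeq_append] at hseq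
                  have hwt2 : trackSeq T [w, b] = [w, b] := by
                    rw [trackSeq_cons_of_mem hwT, trackSeq_cons_of_mem htT]
                    rfl
                  have hwt2' : trackSeq T [w', b] = [w', b] := by
                    rw [trackSeq_cons_of_mem hw'T, trackSeq_cons_of_mem htT]
                    rfl
                  rw [hwt2, hwt2'] at hseq
                  have hww : w = w' := by
                    have := (List.append_inj' hseq rfl).2
                    exact (List.cons.inj this).1
                  subst hww
                  -- w is in the support of both walks
                  have hwp : w ∈ (SimpleGraph.Walk.cons h p').support := by
                    rw [hsupp_p]
                    simp
                  have hwq : w ∈ (SimpleGraph.Walk.cons h' q').support := by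
                    rw [hsupp_q]
                    simp
                  rw [support_cons, List.mem_cons] at hwp hwq
                  have hkey : w = s → False := by
                    intro hws
                    subst hws
                    -- both walks are single edges s-t, so u = u' = b
                    have hu : u = b := by
                      rcases hl : pr.support.tail.reverse with _ | ⟨c, X'⟩
                      · rw [hl] at hsupp_p
                        rw [support_cons] at hsupp_p
                        simp only [List.nil_append] at hsupp_p
                        have hp's : p'.support = [b] := (List.cons.inj hsupp_p).2
                        have := p'.support_eq_cons
                        rw [hp's] at this
                        exact (List.cons.inj this.symm).1
                      · exfalso
                        rw [hl, support_cons] at hsupp_p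

                        have hrest : p'.support = X' ++ [w, b] := (List.cons.inj hsupp_p).2
                        exact hsp (by rw [hrest]; simp)
                    have hu' : u' = b := by
                      rcases hl : qr.support.tail.reverse with _ | ⟨c, X'⟩
                      · rw [hl] at hsupp_q
                        rw [support_cons] at hsupp_q
                        simp only [List.nil_append] at hsupp_q
                        have hq's : q'.support = [b] := (List.cons.inj hsupp_q).2
                        have := q'.support_eq_cons
                        rw [hq's] at this
                        exact (List.cons.inj this.symm).1
                      · exfalso
                        rw [hl, support_cons] at hsupp_q
                        have hrest : q'.support = X' ++ [w, b] := (List.cons.inj hsupp_q).2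
                        exact hsq (by rw [hrest]; simp)
                    exact huu (hu.trans hu'.symm)
                  rcases hwp with hw1 | hw1
                  · exact hkey hw1
                  rcases hwq with hw2 | hw2
                  · exact hkey hw2
                  -- w in both interiors: w = b, contradicting adjacency
                  rw [hp'eq] at hw1
                  rw [hq'eq] at hw2
                  have : w = b := hAB w hw1 hw2
                  exact hadj.ne' this
            · -- split both walks at x and use induction
              obtain ⟨hsplitp, hxAp, hxBp⟩ := path_support_split hp hxp
              obtain ⟨hsplitq, hxAq, hxBq⟩ := path_support_split hq hxq
              rw [hsplitp, hsplitq, trackSeq_append, trackSeq_append,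
                  trackSeq_cons_of_mem hxT, trackSeq_cons_of_mem hxT] at hseq
              have hxa : x ∉ trackSeq T ((SimpleGraph.Walk.cons h p').takeUntil x hxp).support.dropLast :=
                fun hm => hxAp (mem_trackSeq.mp hm).1
              have hxa' : x ∉ trackSeq T ((SimpleGraph.Walk.cons h' q').takeUntil x hxq).support.dropLast :=
                fun hm => hxAq (mem_trackSeq.mp hm).1
              obtain ⟨hA, hB⟩ := split_eq hseq hxa hxa'
              have hlp := length_split (SimpleGraph.Walk.cons h p') hxp
              have hlq := length_split (SimpleGraph.Walk.cons h' q') hxq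
              have h1p : 0 < ((SimpleGraph.Walk.cons h p').takeUntil x hxp).length :=
                length_pos_of_ne _ (Ne.symm hxs)
              have h1q : 0 < ((SimpleGraph.Walk.cons h' q').takeUntil x hxq).length :=
                length_pos_of_ne _ (Ne.symm hxs)
              have h2p : 0 < ((SimpleGraph.Walk.cons h p').dropUntil x hxp).length :=
                length_pos_of_ne _ hxt
              have h2q : 0 < ((SimpleGraph.Walk.cons h' q').dropUntil x hxq).length :=
                length_pos_of_ne _ hxt
              have e1 : (SimpleGraph.Walk.cons h p').takeUntil x hxp
                  = (SimpleGraph.Walk.cons h' q').takeUntil x hxq := by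
                apply ih _ _ (by omega) (hp.takeUntil hxp) (hq.takeUntil hxq)
                rw [support_concat ((SimpleGraph.Walk.cons h p').takeUntil x hxp),
                    support_concat ((SimpleGraph.Walk.cons h' q').takeUntil x hxq),
                    trackSeq_append, trackSeq_append, hA]
              have e2 : (SimpleGraph.Walk.cons h p').dropUntil x hxp
                  = (SimpleGraph.Walk.cons h' q').dropUntil x hxq := by
                apply ih _ _ (by omega) (hp.dropUntil hxp) (hq.dropUntil hxq)
                rw [((SimpleGraph.Walk.cons h p').dropUntil x hxp).support_eq_cons,
                    ((SimpleGraph.Walk.cons h' q').dropUntil x hxq).support_eq_cons,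
                    trackSeq_cons_of_mem hxT, trackSeq_cons_of_mem hxT, hB]
              rw [← take_spec (SimpleGraph.Walk.cons h p') hxp,
                  ← take_spec (SimpleGraph.Walk.cons h' q') hxq, e1, e2]

end Aux

namespace Aux
open SimpleGraph.Walk

lemma start_not_mem_tail {a c : V} {w : G.Walk a c} (hw : w.IsPath) :
    a ∉ w.support.tail := by
  have := hw.support_nodup
  rw [w.support_eq_cons] at this
  exact (List.nodup_cons.mp this).1

lemma internal_vertex {a c : V} {w : G.Walk a c} (hw : w.IsPath) (hl : 2 ≤ w.length) :
    ∃ z, z ∈ w.support ∧ z ≠ a ∧ z ≠ c := by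
  cases w with
  | nil => simp at hl
  | cons hadj w' =>
    rename_i d
    refine ⟨d, by rw [support_cons]; exact List.mem_cons_of_mem _ (start_mem_support _), hadj.ne', ?_⟩
    intro hdc
    subst hdc
    have : w' = SimpleGraph.Walk.nil := loop_path_nil w' hw.of_cons
    rw [this] at hl
    simp at hl

section Rot
variable [DecidableEq V]

lemma mem_rotate {v u₀ y : V} {c : G.Walk v v} (h : u₀ ∈ c.support) :
    y ∈ (c.rotate u₀ h).support ↔ y ∈ c.support := by
  have e1 : (c.rotate u₀ h).support
      = (c.dropUntil u₀ h).support ++ (c.takeUntil u₀ h).support.tail := by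
    show ((c.dropUntil u₀ h).append (c.takeUntil u₀ h)).support = _
    rw [support_append]
  have e2 : c.support = (c.takeUntil u₀ h).support ++ (c.dropUntil u₀ h).support.tail := by
    conv_lhs => rw [← take_spec c h]
    rw [support_append]
  rw [e1, e2, List.mem_append, List.mem_append]
  constructor
  · rintro (h1 | h1)
    · rw [(c.dropUntil u₀ h).support_eq_cons, List.mem_cons] at h1
      rcases h1 with rfl | h1
      · exact Or.inl (end_mem_support _)
      · exact Or.inr h1
    · exact Or.inl (List.mem_of_mem_tail h1)
  · rintro (h1 | h1)
    · rw [(c.takeUntil u₀ h).support_eq_cons, List.mem_cons] at h1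
      rcases h1 with rfl | h1
      · exact Or.inl (end_mem_support _)
      · exact Or.inr h1
    · exact Or.inl (List.mem_of_mem_tail h1)

end Rot
end Aux

namespace Aux
open SimpleGraph.Walk

variable [DecidableEq V]

lemma fvs_of_tracking {s t : V} (hred : Reduced G s t) {T' : Set V}
    (htrack : IsTrackingSet G s t T') : IsFVS G T' := by
  intro vc c hc
  by_contra hno
  push_neg at hno
  -- C is the vertex set of the cycle
  set C : Set V := {y | y ∈ c.support} with hCdef
  have hnoT : ∀ y ∈ C, y ∉ T' := fun y hy => hno y hy
  -- two distinct vertices of C on a common s-t path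
  obtain ⟨z, hadjz, hzC⟩ : ∃ z, G.Adj vc z ∧ z ∈ C := by
    cases c with
    | nil => exact absurd hc (SimpleGraph.Walk.IsCycle.not_of_nil)
    | cons hadj c₂ =>
      exact ⟨_, hadj, by simp [hCdef, support_cons, List.mem_cons,
        Or.inr (start_mem_support c₂)]⟩
  have hvcC : vc ∈ C := by simp [hCdef, start_mem_support]
  have he : s(vc, z) ∈ G.edgeSet := hadjz
  obtain ⟨p, hp, hep⟩ := hred.2 _ he
  have hvcp : vc ∈ p.support := fst_mem_support_of_mem_edges p hep
  have hzp : z ∈ p.support := snd_mem_support_of_mem_edges p hep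
  have hvz : vc ≠ z := hadjz.ne
  -- first C-vertex a on p
  obtain ⟨a, hap, haC, hfirstA⟩ := firstMeet C p ⟨vc, hvcp, hvcC⟩
  set front := p.takeUntil a hap with hfrontdef
  set mid := p.dropUntil a hap with hmiddef
  have hfront_path : front.IsPath := hp.takeUntil hap
  have hmid_path : mid.IsPath := hp.dropUntil hap
  -- last C-vertex b on p (first on mid.reverse)
  obtain ⟨b, hbmr, hbC, hfirstB⟩ := firstMeet C mid.reverse
    ⟨a, end_mem_support _, haC⟩
  set back := (mid.reverse.takeUntil b hbmr).reverse with hbackdef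
  have hback_path : back.IsPath := ((hmid_path.reverse).takeUntil hbmr).reverse
  have hbackC : ∀ y ∈ back.support, y ∈ C → y = b := by
    intro y hy hyC
    rw [hbackdef, support_reverse, List.mem_reverse] at hy
    exact hfirstB y hy hyC
  have hbacksub : back.support ⊆ mid.support := by
    intro y hy
    rw [hbackdef, support_reverse, List.mem_reverse] at hy
    have := support_takeUntil_subset _ hbmr hy
    rwa [support_reverse, List.mem_reverse] at this
  have hpsplit : p.support = front.support ++ mid.support.tail := by
    conv_lhs => rw [← take_spec p hap]
    rw [support_append]
  have hab : a ≠ b := by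
    intro hab
    subst hab
    have hdnil : mid.reverse.dropUntil a hbmr = SimpleGraph.Walk.nil :=
      loop_path_nil _ ((hmid_path.reverse).dropUntil hbmr)
    have hmr : mid.reverse = mid.reverse.takeUntil a hbmr := by
      conv_lhs => rw [← take_spec mid.reverse hbmr]
      rw [hdnil, append_nil]
    have hmidC : ∀ y ∈ mid.support, y ∈ C → y = a := by
      intro y hy hyC
      have : y ∈ mid.reverse.support := by rw [support_reverse, List.mem_reverse]; exact hy
      rw [hmr] at this
      exact hfirstB y this hyC
    have hkey : ∀ y, y ∈ p.support → y ∈ C → y = a := by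
      intro y hy hyC
      rw [hpsplit, List.mem_append] at hy
      rcases hy with hy | hy
      · exact hfirstA y hy hyC
      · exact hmidC y (List.mem_of_mem_tail hy) hyC
    exact hvz ((hkey vc hvcp hvcC).trans (hkey z hzp hzC).symm)
  -- the two arcs of the cycle between a and b
  have hac : a ∈ c.support := haC
  set c' := c.rotate a hac with hc'def
  have hc' : c'.IsCycle := hc.rotate hac
  have hbc' : b ∈ c'.support := (mem_rotate hac).mpr hbC
  set arc1 := c'.takeUntil b hbc' with harc1def
  set drop2 := c'.dropUntil b hbc' with hdrop2def
  set arc2 := drop2.reverse with harc2def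
  have hc'tail : c'.support.tail = arc1.support.tail ++ drop2.support.tail := by
    have : c'.support = arc1.support ++ drop2.support.tail := by
      conv_lhs => rw [← take_spec c' hbc']
      rw [support_append]
    rw [c'.support_eq_cons, arc1.support_eq_cons] at this
    exact (List.cons.inj this).2
  have htlnd : (arc1.support.tail ++ drop2.support.tail).Nodup := by
    rw [← hc'tail]
    exact ((isCycle_def _).mp hc').2.2
  have ha_in_d2 : a ∈ drop2.support.tail := by
    have := end_mem_support drop2
    rw [drop2.support_eq_cons, List.mem_cons] at this
    rcases this with h1 | h1
    · exact absurd h1 hab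
    · exact h1
  have hb_in_a1 : b ∈ arc1.support.tail := by
    have := end_mem_support arc1
    rw [arc1.support_eq_cons, List.mem_cons] at this
    rcases this with h1 | h1
    · exact absurd h1 (Ne.symm hab)
    · exact h1
  have hdisj : arc1.support.tail.Disjoint drop2.support.tail :=
    List.disjoint_of_nodup_append htlnd
  have harc1_path : arc1.IsPath := by
    rw [isPath_def, arc1.support_eq_cons, List.nodup_cons]
    refine ⟨fun ha1 => hdisj ha1 ha_in_d2, (List.nodup_append.mp htlnd).1⟩
  have hdrop2_path : drop2.IsPath := by
    rw [isPath_def, drop2.support_eq_cons, List.nodup_cons]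
    refine ⟨fun hb2 => hdisj hb_in_a1 hb2, (List.nodup_append.mp htlnd).2.1⟩
  have harc2_path : arc2.IsPath := hdrop2_path.reverse
  have harc1C : ∀ y ∈ arc1.support, y ∈ C := by
    intro y hy
    have := support_takeUntil_subset _ hbc' hy
    exact (mem_rotate hac).mp this
  have harc2C : ∀ y ∈ arc2.support, y ∈ C := by
    intro y hy
    rw [harc2def, support_reverse, List.mem_reverse] at hy
    have := support_dropUntil_subset _ hbc' hy
    exact (mem_rotate hac).mp this
  -- building the two paths
  have build : ∀ (arc : G.Walk a b), arc.IsPath → (∀ y ∈ arc.support, y ∈ C) →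
      (front.append (arc.append back)).IsPath ∧
      trackSeq T' (front.append (arc.append back)).support
        = trackSeq T' front.support ++ trackSeq T' back.support.tail := by
    intro arc harc harcC
    have hsupp : (front.append (arc.append back)).support
        = front.support ++ (arc.support.tail ++ back.support.tail) := by
      rw [support_append, tail_support_append]
    constructor
    · rw [isPath_def, hsupp]
      refine List.Nodup.append hfront_path.support_nodup
        (List.Nodup.append ?_ ?_ ?_) ?_
      · exact List.Nodup.sublist (List.tail_sublist _) harc.support_nodup
      · exact List.Nodup.sublist (List.tail_sublist _) hback_path.support_nodup
      · intro y hy1 hy2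
        have hyC : y ∈ C := harcC y (List.mem_of_mem_tail hy1)
        have hyb : y = b := hbackC y (List.mem_of_mem_tail hy2) hyC
        subst hyb
        exact start_not_mem_tail hback_path hy2
      · intro y hy1 hy2
        rw [List.mem_append] at hy2
        rcases hy2 with hy2 | hy2
        · have hyC : y ∈ C := harcC y (List.mem_of_mem_tail hy2)
          have hya : y = a := hfirstA y hy1 hyC
          subst hya
          exact start_not_mem_tail harc hy2
        · -- y in front and in back tail
          have hymid : y ∈ mid.support := hbacksub (List.mem_of_mem_tail hy2)
          have hya : y ≠ a := by
            intro hya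
            subst hya
            have : y = b := hbackC y (List.mem_of_mem_tail hy2) haC
            exact hab this
          have hytail : y ∈ mid.support.tail := by
            rw [mid.support_eq_cons, List.mem_cons] at hymid
            rcases hymid with h1 | h1
            · exact absurd h1 hya
            · exact h1
          have hnd := hp.support_nodup
          rw [hpsplit] at hnd
          exact (List.disjoint_of_nodup_append hnd) hy1 hytail
    · rw [hsupp, trackSeq_append, trackSeq_append]
      have h1 : trackSeq T' arc.support.tail = [] :=
        trackSeq_eq_nil (fun y hy => hnoT y (harcC y (List.mem_of_mem_tail hy)))
      rw [h1]
      simp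
  obtain ⟨hp1, hs1⟩ := build arc1 harc1_path harc1C
  obtain ⟨hp2, hs2⟩ := build arc2 harc2_path harc2C
  have heq : front.append (arc1.append back) = front.append (arc2.append back) :=
    htrack _ _ hp1 hp2 (hs1.trans hs2.symm)
  -- find an internal vertex distinguishing the arcs
  have hlen : 3 ≤ arc1.length + drop2.length := by
    have h1 := length_split c' hbc'
    rw [← harc1def, ← hdrop2def] at h1
    have h2 := hc'.three_le_length
    omega
  have hdistinct : ∃ zz, (zz ∈ arc1.support ∧ zz ∉ arc2.support ∨
      zz ∈ arc2.support ∧ zz ∉ arc1.support) ∧ zz ≠ a ∧ zz ≠ b := by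
    rcases Nat.lt_or_ge arc1.length 2 with hl1 | hl1
    · -- drop2 has length ≥ 2
      obtain ⟨zz, hzz, hzb', hza'⟩ := internal_vertex hdrop2_path (by omega)
      rw [drop2.support_eq_cons, List.mem_cons] at hzz
      rcases hzz with rfl | hzz
      · exact absurd rfl hzb'
      refine ⟨zz, Or.inr ⟨?_, ?_⟩, hza', hzb'⟩
      · rw [harc2def, support_reverse, List.mem_reverse]
        exact List.mem_of_mem_tail hzz
      · rw [arc1.support_eq_cons, List.mem_cons]
        rintro (rfl | hmem)
        · exact hza' rfl
        · exact hdisj hmem hzz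
    · obtain ⟨zz, hzz, hza, hzb⟩ := internal_vertex harc1_path hl1
      rw [arc1.support_eq_cons, List.mem_cons] at hzz
      rcases hzz with rfl | hzz
      · exact absurd rfl hza
      refine ⟨zz, Or.inl ⟨List.mem_of_mem_tail hzz, ?_⟩, hza, hzb⟩
      rw [harc2def, support_reverse, List.mem_reverse, drop2.support_eq_cons, List.mem_cons]
      rintro (rfl | hmem)
      · exact hzb rfl
      · exact hdisj hzz hmem
  obtain ⟨zz, hcase, hza, hzb⟩ := hdistinct
  have hmemsupp : ∀ (arc : G.Walk a b), zz ∈ C →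
      zz ∈ (front.append (arc.append back)).support → zz ∈ arc.support := by
    intro arc hzzC hzz
    rw [support_append, tail_support_append, List.mem_append, List.mem_append] at hzz
    rcases hzz with hzz | hzz | hzz
    · exact absurd (hfirstA zz hzz hzzC) hza
    · exact List.mem_of_mem_tail hzz
    · exact absurd (hbackC zz (List.mem_of_mem_tail hzz) hzzC) hzb
  have hmm : ∀ (arc : G.Walk a b), zz ∈ arc.support →
      zz ∈ (front.append (arc.append back)).support := by
    intro arc hin
    rw [support_append, tail_support_append, List.mem_append, List.mem_append]
    right; left
    rw [arc.support_eq_cons, List.mem_cons] at hin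
    rcases hin with rfl | hin
    · exact absurd rfl hza
    · exact hin
  rcases hcase with ⟨h1in, h1notin⟩ | ⟨h2in, h2notin⟩
  · have hzzC : zz ∈ C := harc1C zz h1in
    have hz1 := hmm arc1 h1in
    rw [heq] at hz1
    exact h1notin (hmemsupp arc2 hzzC hz1)
  · have hzzC : zz ∈ C := harc2C zz h2in
    have hz1 := hmm arc2 h2in
    rw [← heq] at hz1
    exact h2notin (hmemsupp arc1 hzzC hz1)

end Aux

theorem stmt9 {V : Type} [Fintype V] (G : SimpleGraph V) (s t : V) (δ : ℕ)
    (hdeg : ∀ v : V, (G.neighborSet v).ncard ≤ δ)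
    (hred : Reduced G s t) (S : Set V) (hS : IsFVS G S)
    (happrox : ∀ F : Set V, IsFVS G F → S.ncard ≤ 2 * F.ncard) :
    IsTrackingSet G s t (S ∪ nbhd G S) ∧
    ∀ T' : Set V, IsTrackingSet G s t T' →
      (S ∪ nbhd G S).ncard ≤ 2 * (δ + 1) * T'.ncard := by
  classical
  have htrackset : IsTrackingSet G s t (S ∪ nbhd G S) := by
    intro p q hp hq hseq
    exact Aux.trackA hS Set.subset_union_left
      (fun u v hu hadj => Set.mem_union_right _ (show v ∈ nbhd G S from ⟨u, hu, hadj⟩))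
      (p.length + q.length) p q le_rfl hp hq hseq
  refine ⟨htrackset, ?_⟩
  intro T' hT'
  have hfvs : IsFVS G T' := Aux.fvs_of_tracking hred hT'
  have h1 : S.ncard ≤ 2 * T'.ncard := happrox T' hfvs
  have h2 : (nbhd G S).ncard ≤ δ * S.ncard := by
    set s' := S.toFinite.toFinset with hs'
    have hrepr : nbhd G S = ↑(s'.biUnion (fun u => (G.neighborSet u).toFinite.toFinset)) := by
      ext v
      simp only [nbhd, hs', Finset.coe_biUnion, Set.Finite.coe_toFinset, Set.mem_setOf_eq,
        Set.mem_iUnion, SimpleGraph.mem_neighborSet, exists_prop]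
    rw [hrepr, Set.ncard_coe_finset]
    calc (s'.biUnion (fun u => (G.neighborSet u).toFinite.toFinset)).card
        ≤ ∑ u ∈ s', ((G.neighborSet u).toFinite.toFinset).card := Finset.card_biUnion_le
      _ ≤ s'.card * δ := by
          have := Finset.sum_le_card_nsmul s'
            (fun u => ((G.neighborSet u).toFinite.toFinset).card) δ
            (fun x _ => by
              show ((G.neighborSet x).toFinite.toFinset).card ≤ δ
              rw [← Set.ncard_eq_toFinset_card _ (G.neighborSet x).toFinite]
              exact hdeg x)
          simpa [smul_eq_mul] using this
      _ = δ * S.ncard := by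
          rw [Nat.mul_comm]
          congr 1
          rw [Set.ncard_eq_toFinset_card _ S.toFinite]
  have h3 : (S ∪ nbhd G S).ncard ≤ S.ncard + (nbhd G S).ncard := Set.ncard_union_le _ _
  calc (S ∪ nbhd G S).ncard ≤ S.ncard + δ * S.ncard := by omega
    _ = (δ + 1) * S.ncard := by ring
    _ ≤ (δ + 1) * (2 * T'.ncard) := Nat.mul_le_mul_left _ h1
    _ = 2 * (δ + 1) * T'.ncard := by ring
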